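/- arXiv:2408.09299 — 2 statements merged into one kernel-verified Lean document; each statement's English description precedes it below -/
import Mathlib

section
/- Let (Γ, α) be an abstract GKM₃ graph with its unique compatible connection ∇, let v be a vertex, let e, f ∈ E_v be distinct, and let (g_k) be the connection path through e and f, i.e. g₁ = e, g₂ = ∇_{g₁} f, and g_{k+1} = ∇_{g_k} ḡ_{k−1} for k ≥ 2. Then: (a) for every k, the label α(g_k) lies in the ℚ-span of α(e) and α(f) (a condition independent of the choices of signs); (b) the sequence (g_k) is periodic, with some minimal period N ≥ 2; and (c) the connection path does not self-intersect: the vertices i(g₁), …, i(g_N) are pairwise distinct. -/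
namespace GKMQ

/-- `x` equals `y` up to sign (`x` is a "lift" of the class of `y` mod sign). -/
def PM {m : ℕ} (x y : Fin m → ℤ) : Prop := x = y ∨ x = -y

/-- coefficientwise coercion of an integer vector to `ℚ`. -/
def ratQ {m : ℕ} (x : Fin m → ℤ) : Fin m → ℚ := fun i => (x i : ℚ)

/-- An abstract graph: finite vertex and oriented-edge sets, a fixed-point-free
orientation-reversal involution `bar`, no loops; multiple edges are allowed. -/
structure Graph where
  V : Type
  E : Type
  fintypeV : Fintype V
  fintypeE : Fintype E
  src : E → V
  bar : E → E
  bar_invol : ∀ e, bar (bar e) = e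
  bar_ne : ∀ e, bar e ≠ e
  no_loop : ∀ e, src (bar e) ≠ src e

/-- The terminal vertex of an oriented edge. -/
def Graph.tgt (G : Graph) (e : G.E) : G.V := G.src (G.bar e)

/-- A connection on a graph; `map e` is a bijection `E_{i(e)} → E_{t(e)}` with
`∇_e e = ē` and `∇_{ē} = (∇_e)⁻¹` (its values outside `E_{i(e)}` are irrelevant). -/
structure Connection (G : Graph) where
  map : G.E → G.E → G.E
  map_src : ∀ e f, G.src f = G.src e → G.src (map e f) = G.tgt e
  map_self : ∀ e, map e e = G.bar e
  map_bar : ∀ e f, G.src f = G.src e → map (G.bar e) (map e f) = f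

/-- Compatibility of a connection with an edge labeling (mod sign): for every edge `e`
and `f ∈ E_{i(e)}` there are lifts of the labels of `f` and `∇_e f` differing by an
integer multiple of the label of `e`. -/
def CompatibleConn (G : Graph) {m : ℕ} (label : G.E → (Fin m → ℤ)) (C : Connection G) :
    Prop :=
  ∀ e f, G.src f = G.src e →
    ∃ x y : Fin m → ℤ, PM x (label f) ∧ PM y (label (C.map e f)) ∧
      ∃ c : ℤ, y = x + c • label e

/-- An axial function with values in `ℤ^m` modulo sign; `label` is a choice of
representatives, so that all labels are well defined up to sign. -/
structure Axial (G : Graph) (m : ℕ) where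
  label : G.E → (Fin m → ℤ)
  label_bar : ∀ e, PM (label (G.bar e)) (label e)
  indep₂ : ∀ e f, G.src f = G.src e → e ≠ f →
    LinearIndependent ℚ ![ratQ (label e), ratQ (label f)]
  exists_compat : ∃ C : Connection G, CompatibleConn G label C

/-- The GKM_k condition: at every vertex, any `k` of the labels are linearly
independent over `ℚ`. -/
def Axial.IsGKM {G : Graph} {m : ℕ} (A : Axial G m) (k : ℕ) : Prop :=
  ∀ v : G.V, ∀ s : Finset G.E, (∀ e ∈ s, G.src e = v) → s.card = k →
    LinearIndependent ℚ (fun e : {x // x ∈ s} => ratQ (A.label e.1))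

/-- A full quaternionically compatible family of lifts at a vertex `v`: `L` assigns to
every edge at `v` a lift of its label, `ℓ` is a lift of the quaternionic weight, and the
lifts of each quaternionic pair sum to `ℓ`. -/
def QFam (G : Graph) {m : ℕ} (label : G.E → (Fin m → ℤ)) (lam : G.V → (Fin m → ℤ))
    (qpair : G.E → G.E) (v : G.V) (L : G.E → (Fin m → ℤ)) (ℓ : Fin m → ℤ) : Prop :=
  PM ℓ (lam v) ∧ ∀ e, G.src e = v → PM (L e) (label e) ∧ L e + L (qpair e) = ℓ

/-- A partial family `s` of lifts, together with a lift `ℓ` of the quaternionic weight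
at `v`, is quaternionically compatible if it extends to a full family. -/
def QCompat (G : Graph) {m : ℕ} (label : G.E → (Fin m → ℤ)) (lam : G.V → (Fin m → ℤ))
    (qpair : G.E → G.E) (v : G.V) (s : List (G.E × (Fin m → ℤ))) (ℓ : Fin m → ℤ) :
    Prop :=
  ∃ L, QFam G label lam qpair v L ℓ ∧ ∀ p ∈ s, L p.1 = p.2

/-- Condition (2) in the definition of a quaternionic structure on a GKM graph. -/
def QuatCondTwo (G : Graph) {m : ℕ} (label : G.E → (Fin m → ℤ))
    (lam : G.V → (Fin m → ℤ)) (qpair : G.E → G.E) : Prop :=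
  ∃ C : Connection G, CompatibleConn G label C ∧
    (∀ e f, G.src f = G.src e → C.map e (qpair f) = qpair (C.map e f)) ∧
    ∀ e xe lv, QCompat G label lam qpair (G.src e) [(e, xe)] lv →
      ∃ lw, (∃ c : ℤ, lw = lv + c • label e) ∧
        QCompat G label lam qpair (G.tgt e) [(G.bar e, -xe)] lw ∧
        ∀ f, G.src f = G.src e → ∀ xf,
          QCompat G label lam qpair (G.src e) [(e, xe), (f, xf)] lv →
          ∀ y, PM y (label (C.map e f)) → (∃ c : ℤ, y = xf + c • label e) →
            QCompat G label lam qpair (G.tgt e) [(G.bar e, -xe), (C.map e f, y)] lw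

/-- A quaternionic structure on an abstract GKM graph: a quaternionic weight (mod sign)
at every vertex, and a grouping of the edges at each vertex into quaternionic pairs,
subject to conditions (1) (`pair_sum`) and (2) (`cond₂`). -/
structure QuatStructure (G : Graph) {m : ℕ} (A : Axial G m) where
  lam : G.V → (Fin m → ℤ)
  qpair : G.E → G.E
  qpair_src : ∀ e, G.src (qpair e) = G.src e
  qpair_ne : ∀ e, qpair e ≠ e
  qpair_invol : ∀ e, qpair (qpair e) = e
  pair_sum : ∀ e, ∃ x y : Fin m → ℤ, PM x (A.label e) ∧ PM y (A.label (qpair e)) ∧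
    PM (x + y) (lam (G.src e))
  cond₂ : QuatCondTwo G A.label lam qpair

/-- Auxiliary function: consecutive pairs of edges of a connection path. -/
def connAux (G : Graph) (C : Connection G) (e₁ e₂ : G.E) : ℕ → G.E × G.E
  | 0 => (e₁, e₂)
  | n + 1 =>
    let p := connAux G C e₁ e₂ n
    (p.2, C.map p.2 (G.bar p.1))

/-- The connection path with prescribed first two edges `e₁, e₂` (where `t(e₁) = i(e₂)`):
`g 0 = e₁`, `g 1 = e₂`, `g (k+2) = ∇_{g (k+1)} (bar (g k))`. -/
def connPathFrom (G : Graph) (C : Connection G) (e₁ e₂ : G.E) (k : ℕ) : G.E :=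
  (connAux G C e₁ e₂ k).1

/-- The connection path through two edges `e, f` starting at the same vertex:
`g 0 = e`, `g 1 = ∇_e f`, `g (k+2) = ∇_{g (k+1)} (bar (g k))`. -/
def connPath (G : Graph) (C : Connection G) (e f : G.E) : ℕ → G.E :=
  connPathFrom G C e (C.map e f)

def IsPeriod {α : Type*} (g : ℕ → α) (N : ℕ) : Prop := 0 < N ∧ ∀ k, g (k + N) = g k

/-- `N` is the minimal period of the sequence `g`. -/
def MinPeriod {α : Type*} (g : ℕ → α) (N : ℕ) : Prop :=
  IsPeriod g N ∧ ∀ N', IsPeriod g N' → N ≤ N'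

/-- A 2-face (given by its connection path `g`) is quaternionic if at each of its
vertices the two edges of the face based there form a quaternionic pair. -/
def IsQuatPath (G : Graph) {m : ℕ} {A : Axial G m} (Q : QuatStructure G A)
    (g : ℕ → G.E) : Prop :=
  ∀ k, Q.qpair (g (k + 1)) = G.bar (g k)

/-- A noncomplex triangle: a quaternionic 2-face which is a triangle with labels
`±a, ±λ, ±(λ-a)` and quaternionic weights `±λ, ±(λ-a), ±a` at its three vertices. -/
def IsNoncomplexTriangle (G : Graph) {m : ℕ} {A : Axial G m} (Q : QuatStructure G A)
    (g : ℕ → G.E) : Prop :=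
  MinPeriod g 3 ∧ IsQuatPath G Q g ∧
  ∃ a l : Fin m → ℤ,
    PM (A.label (g 0)) a ∧ PM (A.label (g 1)) l ∧ PM (A.label (g 2)) (l - a) ∧
    PM (Q.lam (G.src (g 0))) l ∧ PM (Q.lam (G.src (g 1))) (l - a) ∧
    PM (Q.lam (G.src (g 2))) a

/-- Hypothesis (H): a GKM₃ graph with quaternionic structure all of whose quaternionic
2-faces are biangles or noncomplex triangles and all of whose complex 2-faces are
triangles or quadrangles. -/
def HypH (G : Graph) {m : ℕ} (A : Axial G m) (Q : QuatStructure G A) : Prop :=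
  A.IsGKM 3 ∧
  ∀ C : Connection G, CompatibleConn G A.label C →
    ∀ e f, G.src f = G.src e → f ≠ e →
      ∀ N, MinPeriod (connPath G C e f) N →
        (IsQuatPath G Q (connPath G C e f) →
          N = 2 ∨ IsNoncomplexTriangle G Q (connPath G C e f)) ∧
        (¬ IsQuatPath G Q (connPath G C e f) → N = 3 ∨ N = 4)

/-- A compatible signed structure on a 2-face with edges `g 0, …, g (N-1)`
(indices mod `N`): lifts `γ k` of the labels `α (g k)` such that consecutive lifts
satisfy the connection congruence and are quaternionically compatible at each vertex. -/
def SignedStructureOn (G : Graph) {m : ℕ} (A : Axial G m) (Q : QuatStructure G A)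
    (g : ℕ → G.E) (N : ℕ) (γ : ℕ → (Fin m → ℤ)) : Prop :=
  (∀ k, γ (k + N) = γ k) ∧
  (∀ k, PM (γ k) (A.label (g k))) ∧
  (∀ k, ∃ c : ℤ, γ (k + 2) + γ k = c • γ (k + 1)) ∧
  (∀ k, ∃ ℓ, QCompat G A.label Q.lam Q.qpair (G.tgt (g k))
      [(G.bar (g k), -(γ k)), (g (k + 1), γ (k + 1))] ℓ)

/-- The raw data of a GKM graph with quaternionic structure: vertices, oriented edges,
labels, quaternionic weights (both as chosen representatives mod sign) and quaternionic
pairs. -/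
structure QData (m : ℕ) where
  V : Type
  E : Type
  src : E → V
  bar : E → E
  label : E → (Fin m → ℤ)
  lam : V → (Fin m → ℤ)
  qpair : E → E

/-- The quaternionic GKM data underlying a GKM graph with quaternionic structure. -/
def toQData (G : Graph) {m : ℕ} (A : Axial G m) (Q : QuatStructure G A) : QData m :=
  ⟨G.V, G.E, G.src, G.bar, A.label, Q.lam, Q.qpair⟩

/-- An isomorphism of GKM graphs with quaternionic structure: bijections of vertices and
oriented edges commuting with `src`, `bar` and the quaternionic pairing, and preserving
the labels and the quaternionic weights up to sign. -/
structure QIso {m : ℕ} (D₁ D₂ : QData m) where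
  vmap : D₁.V ≃ D₂.V
  emap : D₁.E ≃ D₂.E
  src_comm : ∀ e, D₂.src (emap e) = vmap (D₁.src e)
  bar_comm : ∀ e, D₂.bar (emap e) = emap (D₁.bar e)
  label_pm : ∀ e, PM (D₂.label (emap e)) (D₁.label e)
  lam_pm : ∀ v, PM (D₂.lam (vmap v)) (D₁.lam v)
  qpair_comm : ∀ e, D₂.qpair (emap e) = emap (D₁.qpair e)

/-- The model graph `Γ_{ℍP}(λ; β₀, …, β_n)` of a torus action on `ℍPⁿ`: vertices
`0, …, n`, two edges between any two distinct vertices `k, l`, labeled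
`±(β_k - β_l)` and `±(λ - β_k - β_l)`, quaternionic weight `±(λ - 2β_k)` at `k`,
the two edges of each biangle forming a quaternionic pair. -/
def modelHP (n : ℕ) {m : ℕ} (lam₀ : Fin m → ℤ) (β : Fin (n + 1) → (Fin m → ℤ)) :
    QData m where
  V := Fin (n + 1)
  E := {p : Fin (n + 1) × Fin (n + 1) // p.1 ≠ p.2} × Bool
  src e := e.1.1.1
  bar e := (⟨(e.1.1.2, e.1.1.1), Ne.symm e.1.2⟩, e.2)
  label e := if e.2 then lam₀ - β e.1.1.1 - β e.1.1.2 else β e.1.1.1 - β e.1.1.2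
  lam k := lam₀ - (2 : ℤ) • β k
  qpair e := (e.1, !e.2)

/-- The 2-element subset `{i, j}` (`i ≠ j`) realized as a sorted pair. -/
def uPair {n : ℕ} (i j : Fin n) (h : i ≠ j) : {p : Fin n × Fin n // p.1 < p.2} :=
  if hlt : i < j then ⟨(i, j), hlt⟩ else ⟨(j, i), h.lt_or_gt.resolve_left hlt⟩

/-- The model graph `Γ_{Gr}(β₁, …, β_n)` of a torus action on `Gr₂(ℂⁿ)`: vertices the
2-element subsets of `{1, …, n}`; an oriented edge `(i, j, k)` from `{i, j}` to `{i, k}`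
for `j ≠ k`, labeled `±(β_j - β_k)`; quaternionic weight `±(β_i - β_j)` at `{i, j}`;
the edges `(i, j, k)` and `(j, i, k)` forming a quaternionic pair at `{i, j}`. -/
def modelGr (n : ℕ) {m : ℕ} (β : Fin n → (Fin m → ℤ)) : QData m where
  V := {p : Fin n × Fin n // p.1 < p.2}
  E := {t : Fin n × Fin n × Fin n // t.1 ≠ t.2.1 ∧ t.1 ≠ t.2.2 ∧ t.2.1 ≠ t.2.2}
  src e := uPair e.1.1 e.1.2.1 e.2.1
  bar e := ⟨(e.1.1, e.1.2.2, e.1.2.1), e.2.2.1, e.2.1, Ne.symm e.2.2.2⟩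
  label e := β e.1.2.1 - β e.1.2.2
  lam v := β v.1.1 - β v.1.2
  qpair e := ⟨(e.1.2.1, e.1.1, e.1.2.2), Ne.symm e.2.1, e.2.2.2, e.2.2.1⟩

/-- A subgraph (with quaternionic structure) of a GKM graph with quaternionic
structure: sets of vertices and of oriented edges closed under `src`, `bar` and the
quaternionic pairing. -/
structure SubData (G : Graph) {m : ℕ} (A : Axial G m) (Q : QuatStructure G A) where
  W : Set G.V
  F : Set G.E
  src_mem : ∀ e ∈ F, G.src e ∈ W
  bar_mem : ∀ e ∈ F, G.bar e ∈ F
  qpair_mem : ∀ e ∈ F, Q.qpair e ∈ F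

/-- The quaternionic GKM data induced on a subgraph. -/
def SubData.toQData {G : Graph} {m : ℕ} {A : Axial G m} {Q : QuatStructure G A}
    (S : SubData G A Q) : QData m where
  V := S.W
  E := S.F
  src e := ⟨G.src e.1, S.src_mem e.1 e.2⟩
  bar e := ⟨G.bar e.1, S.bar_mem e.1 e.2⟩
  label e := A.label e.1
  lam v := Q.lam v.1
  qpair e := ⟨Q.qpair e.1, S.qpair_mem e.1 e.2⟩

section
variable {G : Graph} {C : Connection G}

lemma connPath_zero (e f : G.E) : connPath G C e f 0 = e := rfl

lemma connPath_one (e f : G.E) : connPath G C e f 1 = C.map e f := rfl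

lemma connPath_step (e f : G.E) (k : ℕ) :
    connPath G C e f (k + 2) =
      C.map (connPath G C e f (k + 1)) (G.bar (connPath G C e f k)) := rfl

lemma Connection.map_inj {e f₁ f₂ : G.E} (h₁ : G.src f₁ = G.src e)
    (h₂ : G.src f₂ = G.src e) (h : C.map e f₁ = C.map e f₂) : f₁ = f₂ := by
  have := C.map_bar e f₁ h₁
  rw [h, C.map_bar e f₂ h₂] at this
  exact this.symm

variable {e f : G.E}

lemma connPath_src_succ (hsf : G.src f = G.src e) :
    ∀ k, G.src (connPath G C e f (k + 1)) = G.tgt (connPath G C e f k) := by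
  intro k
  induction k with
  | zero => exact C.map_src e f hsf
  | succ n ih =>
    rw [connPath_step]
    apply C.map_src
    rw [ih]; rfl

lemma connPath_src_bar (hsf : G.src f = G.src e) (k : ℕ) :
    G.src (G.bar (connPath G C e f k)) = G.src (connPath G C e f (k + 1)) :=
  (connPath_src_succ hsf k).symm

lemma connPath_no_backtrack (hsf : G.src f = G.src e) (hef : e ≠ f) :
    ∀ k, connPath G C e f (k + 1) ≠ G.bar (connPath G C e f k) := by
  intro k
  induction k with
  | zero =>
    intro h
    rw [connPath_one, connPath_zero, ← C.map_self e] at h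
    exact hef (C.map_inj hsf rfl h).symm
  | succ n ih =>
    intro h
    rw [connPath_step, ← C.map_self (connPath G C e f (n+1))] at h
    exact ih ((C.map_inj (connPath_src_bar hsf n) rfl h).symm)

/-- backward recursion -/
lemma connPath_back (hsf : G.src f = G.src e) (k : ℕ) :
    connPath G C e f k =
      G.bar (C.map (G.bar (connPath G C e f (k + 1))) (connPath G C e f (k + 2))) := by
  rw [connPath_step, C.map_bar _ _ (connPath_src_bar hsf k), G.bar_invol]

/-- agreement at two consecutive indices propagates to a period -/
lemma connPath_shift (hsf : G.src f = G.src e) {d a : ℕ}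
    (h0 : connPath G C e f (a + d) = connPath G C e f a)
    (h1 : connPath G C e f (a + 1 + d) = connPath G C e f (a + 1)) :
    ∀ n, connPath G C e f (n + d) = connPath G C e f n := by
  have fwd : ∀ n, connPath G C e f (n + d) = connPath G C e f n →
      connPath G C e f (n + 1 + d) = connPath G C e f (n + 1) →
      connPath G C e f (n + 2 + d) = connPath G C e f (n + 2) := by
    intro n p q
    rw [show n + 2 + d = (n + d) + 2 by omega, connPath_step, connPath_step,
      show n + d + 1 = n + 1 + d by omega, p, q]
  have bwd : ∀ n, connPath G C e f (n + 1 + d) = connPath G C e f (n + 1) →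
      connPath G C e f (n + 2 + d) = connPath G C e f (n + 2) →
      connPath G C e f (n + d) = connPath G C e f n := by
    intro n p q
    rw [connPath_back hsf (n + d), connPath_back hsf n,
      show n + d + 1 = n + 1 + d by omega, show n + d + 2 = n + 2 + d by omega, p, q]
  have Q : ∀ t, connPath G C e f (a - t + d) = connPath G C e f (a - t) ∧
      connPath G C e f (a - t + 1 + d) = connPath G C e f (a - t + 1) := by
    intro t
    induction t with
    | zero => exact ⟨h0, h1⟩
    | succ s ih =>
      rcases Nat.lt_or_ge s a with hs | hs
      · have hsa : a - (s + 1) + 1 = a - s := by omega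
        refine ⟨?_, by rw [hsa]; exact ih.1⟩
        apply bwd (a - (s + 1)) (by rw [hsa]; exact ih.1)
        rw [show a - (s + 1) + 2 = a - s + 1 by omega]
        exact ih.2
      · rw [show a - (s + 1) = a - s by omega]; exact ih
  have Q0 := Q a
  simp only [Nat.sub_self] at Q0
  have R : ∀ n, connPath G C e f (n + d) = connPath G C e f n ∧
      connPath G C e f (n + 1 + d) = connPath G C e f (n + 1) := by
    intro n
    induction n with
    | zero => simpa using Q0
    | succ s ih =>
      refine ⟨ih.2, ?_⟩
      have := fwd s ih.1 ih.2
      rwa [show s + 2 + d = s + 1 + 1 + d by omega, show s + 2 = s + 1 + 1 by omega] at this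
  exact fun n => (R n).1

end
section
variable {m : ℕ}

lemma ratQ_add (x y : Fin m → ℤ) : ratQ (x + y) = ratQ x + ratQ y := by
  funext i; simp [ratQ]

lemma ratQ_neg (x : Fin m → ℤ) : ratQ (-x) = -ratQ x := by
  funext i; simp [ratQ]

lemma ratQ_zsmul (c : ℤ) (x : Fin m → ℤ) : ratQ (c • x) = (c : ℚ) • ratQ x := by
  funext i; simp [ratQ]

lemma PM.symm {x y : Fin m → ℤ} (h : PM x y) : PM y x := by
  rcases h with h | h
  · exact Or.inl h.symm
  · exact Or.inr (by rw [h, neg_neg])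

lemma PM.mem_span {x y : Fin m → ℤ} {p : Submodule ℚ (Fin m → ℚ)} (h : PM x y)
    (hy : ratQ y ∈ p) : ratQ x ∈ p := by
  rcases h with h | h
  · rwa [h]
  · rw [h, ratQ_neg]; exact p.neg_mem hy

end

section
variable {G : Graph} {m : ℕ} {A : Axial G m} {C : Connection G} {e f : G.E}

lemma connPath_label_mem (hC : CompatibleConn G A.label C) (hsf : G.src f = G.src e) :
    ∀ k, ratQ (A.label (connPath G C e f k)) ∈
        Submodule.span ℚ {ratQ (A.label e), ratQ (A.label f)} ∧
      ratQ (A.label (connPath G C e f (k + 1))) ∈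
        Submodule.span ℚ {ratQ (A.label e), ratQ (A.label f)} := by
  set p := Submodule.span ℚ {ratQ (A.label e), ratQ (A.label f)} with hp
  have hmem_e : ratQ (A.label e) ∈ p :=
    Submodule.subset_span (Set.mem_insert _ _)
  have hmem_f : ratQ (A.label f) ∈ p :=
    Submodule.subset_span (Set.mem_insert_of_mem _ rfl)
  have key : ∀ (a b : G.E), G.src b = G.src a → ratQ (A.label a) ∈ p →
      ratQ (A.label b) ∈ p → ratQ (A.label (C.map a b)) ∈ p := by
    intro a b hab ha hb
    obtain ⟨x, y, hx, hy, c, hc⟩ := hC a b hab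
    refine hy.symm.mem_span ?_
    rw [hc, ratQ_add, ratQ_zsmul]
    exact p.add_mem (hx.mem_span hb) (p.smul_mem _ ha)
  intro k
  induction k with
  | zero =>
    refine ⟨hmem_e, ?_⟩
    rw [connPath_one]
    exact key e f hsf hmem_e hmem_f
  | succ n ih =>
    refine ⟨ih.2, ?_⟩
    rw [connPath_step]
    refine key _ _ (connPath_src_bar hsf n) ih.2 ((A.label_bar _).mem_span ih.1)
end
section
variable {G : Graph} {m : ℕ} {A : Axial G m}

/-- In a GKM₃ graph, no three distinct edges at a vertex can have labels in the span
of two fixed vectors. -/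
lemma three_edges_dep (h₃ : A.IsGKM 3) {w : G.V} {a b c : G.E}
    (ha : G.src a = w) (hb : G.src b = w) (hc : G.src c = w)
    (hab : a ≠ b) (hac : a ≠ c) (hbc : b ≠ c) (u v' : Fin m → ℚ)
    (hma : ratQ (A.label a) ∈ Submodule.span ℚ {u, v'})
    (hmb : ratQ (A.label b) ∈ Submodule.span ℚ {u, v'})
    (hmc : ratQ (A.label c) ∈ Submodule.span ℚ {u, v'}) : False := by
  classical
  set p := Submodule.span ℚ ({u, v'} : Set (Fin m → ℚ)) with hp
  set s : Finset G.E := {a, b, c} with hs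
  have hcard : s.card = 3 := by
    rw [hs, Finset.card_insert_of_notMem (by simp [hab, hac]),
      Finset.card_insert_of_notMem (by simp [hbc]), Finset.card_singleton]
  have hsrc : ∀ x ∈ s, G.src x = w := by
    intro x hx
    rcases by simpa [hs] using hx with h | h | h <;> subst h <;> assumption
  have li := h₃ w s hsrc hcard
  have hmem : ∀ x : {y // y ∈ s}, ratQ (A.label x.1) ∈ p := by
    intro ⟨x, hx⟩
    rcases by simpa [hs] using hx with h | h | h <;> subst h <;> assumption
  have li' : LinearIndependent ℚ (fun x : {y // y ∈ s} => (⟨ratQ (A.label x.1), hmem x⟩ : p)) :=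
    LinearIndependent.of_comp p.subtype li
  haveI : FiniteDimensional ℚ p := FiniteDimensional.span_of_finite _ (Set.toFinite _)
  have h3le : 3 ≤ Module.finrank ℚ p := by
    have := li'.fintype_card_le_finrank
    rwa [Fintype.card_coe, hcard] at this
  have hle2 : Module.finrank ℚ p ≤ 2 := by
    refine le_trans (finrank_span_le_card (R := ℚ) ({u, v'} : Set (Fin m → ℚ))) ?_
    rw [Set.toFinset_insert, Set.toFinset_singleton]
    exact (Finset.card_insert_le _ _).trans (by simp)
  omega

end
section
variable {G : Graph} {C : Connection G} {e f : G.E}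

lemma connPath_exists_period (hsf : G.src f = G.src e) :
    ∃ d, 0 < d ∧ ∀ n, connPath G C e f (n + d) = connPath G C e f n := by
  haveI := G.fintypeE
  have : ¬ Function.Injective (fun n => (connPath G C e f n, connPath G C e f (n + 1))) :=
    not_injective_infinite_finite
      (fun n => (connPath G C e f n, connPath G C e f (n + 1)))
  rw [Function.not_injective_iff] at this
  obtain ⟨i, j, hP, hij⟩ := this
  rcases hij.lt_or_gt with h | h
  · refine ⟨j - i, by omega, connPath_shift hsf (a := i) (d := j - i) ?_ ?_⟩
    · rw [show i + (j - i) = j by omega]; exact (congrArg Prod.fst hP).symm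
    · rw [show i + 1 + (j - i) = j + 1 by omega]; exact (congrArg Prod.snd hP).symm
  · refine ⟨i - j, by omega, connPath_shift hsf (a := j) (d := i - j) ?_ ?_⟩
    · rw [show j + (i - j) = i by omega]; exact congrArg Prod.fst hP
    · rw [show j + 1 + (i - j) = i + 1 by omega]; exact congrArg Prod.snd hP

lemma connPath_reverse (hsf : G.src f = G.src e) {a b : ℕ}
    (hA : connPath G C e f a = G.bar (connPath G C e f b))
    (hB : connPath G C e f (a + 1) = G.bar (connPath G C e f (b - 1))) :
    ∀ t, t ≤ b → connPath G C e f (a + t) = G.bar (connPath G C e f (b - t)) := by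
  have key : ∀ t, (t ≤ b → connPath G C e f (a + t) = G.bar (connPath G C e f (b - t))) ∧
      (t + 1 ≤ b → connPath G C e f (a + (t + 1)) = G.bar (connPath G C e f (b - (t + 1)))) := by
    intro t
    induction t with
    | zero => exact ⟨fun _ => by simpa using hA, fun _ => hB⟩
    | succ s ih =>
      refine ⟨ih.2, fun h => ?_⟩
      have p := ih.1 (by omega)
      have q := ih.2 (by omega)
      have back := connPath_back (C := C) hsf (b - s - 2)
      rw [show b - s - 2 + 1 = b - (s + 1) by omega, show b - s - 2 + 2 = b - s by omega] at back
      rw [show a + (s + 1 + 1) = a + s + 2 by omega, connPath_step,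
        show a + s + 1 = a + (s + 1) by omega, p, q, G.bar_invol,
        show b - (s + 1 + 1) = b - s - 2 by omega, back, G.bar_invol]
  exact fun t ht => (key t).1 ht

lemma connPath_period_mul {N : ℕ}
    (hper : ∀ n, connPath G C e f (n + N) = connPath G C e f n) :
    ∀ s n, connPath G C e f (n + s * N) = connPath G C e f n := by
  intro s
  induction s with
  | zero => simp
  | succ t ih =>
    intro n
    rw [show n + (t + 1) * N = n + t * N + N by ring, hper, ih]

end
section
variable {G : Graph} {m : ℕ} {A : Axial G m} {C : Connection G} {e f : G.E}

lemma connPath_core (h₃ : A.IsGKM 3) (hC : CompatibleConn G A.label C)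
    (hsf : G.src f = G.src e) (hef : e ≠ f) {N' : ℕ}
    (hper : ∀ n, connPath G C e f (n + (N' + 2)) = connPath G C e f n)
    (hmin : ∀ d, 0 < d → (∀ n, connPath G C e f (n + d) = connPath G C e f n) →
      N' + 2 ≤ d)
    {j k : ℕ} (hjk : j < k) (hk : k < N' + 2)
    (heq : G.src (connPath G C e f j) = G.src (connPath G C e f k)) : False := by
  classical
  have lab : ∀ n, ratQ (A.label (connPath G C e f n)) ∈
      Submodule.span ℚ {ratQ (A.label e), ratQ (A.label f)} :=
    fun n => (connPath_label_mem hC hsf n).1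
  have labb : ∀ n, ratQ (A.label (G.bar (connPath G C e f n))) ∈
      Submodule.span ℚ {ratQ (A.label e), ratQ (A.label f)} :=
    fun n => (A.label_bar _).mem_span (lab n)
  have hmul := connPath_period_mul (C := C) (e := e) (f := f) hper
  have hpj : connPath G C e f (j + N' + 2) = connPath G C e f j := by
    have := hper j; rwa [show j + (N' + 2) = j + N' + 2 by omega] at this
  have hpk : connPath G C e f (k + N' + 2) = connPath G C e f k := by
    have := hper k; rwa [show k + (N' + 2) = k + N' + 2 by omega] at this
  have hsrc2j : G.src (G.bar (connPath G C e f (j + N' + 1))) =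
      G.src (connPath G C e f j) := by
    rw [connPath_src_bar hsf (j + N' + 1), show j + N' + 1 + 1 = j + N' + 2 by omega, hpj]
  have hsrc2k : G.src (G.bar (connPath G C e f (k + N' + 1))) =
      G.src (connPath G C e f k) := by
    rw [connPath_src_bar hsf (k + N' + 1), show k + N' + 1 + 1 = k + N' + 2 by omega, hpk]
  have hnbj : connPath G C e f j ≠ G.bar (connPath G C e f (j + N' + 1)) := by
    rw [← hpj, show j + N' + 2 = (j + N' + 1) + 1 by omega]
    exact connPath_no_backtrack hsf hef _
  have hnbk : connPath G C e f k ≠ G.bar (connPath G C e f (k + N' + 1)) := by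
    rw [← hpk, show k + N' + 2 = (k + N' + 1) + 1 by omega]
    exact connPath_no_backtrack hsf hef _
  have hb1 : connPath G C e f k = connPath G C e f j ∨
      connPath G C e f k = G.bar (connPath G C e f (j + N' + 1)) := by
    by_contra hcon
    push_neg at hcon
    exact three_edges_dep h₃ rfl hsrc2j heq.symm hnbj (Ne.symm hcon.1) (Ne.symm hcon.2)
      _ _ (lab j) (labb _) (lab k)
  have hb2 : G.bar (connPath G C e f (k + N' + 1)) = connPath G C e f j ∨
      G.bar (connPath G C e f (k + N' + 1)) = G.bar (connPath G C e f (j + N' + 1)) := by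
    by_contra hcon
    push_neg at hcon
    exact three_edges_dep h₃ rfl hsrc2j (hsrc2k.trans heq.symm) hnbj
      (Ne.symm hcon.1) (Ne.symm hcon.2) _ _ (lab j) (labb _) (labb _)
  rcases hb1 with h1 | h1
  · -- case A: the two pairs of edges coincide in order; shift gives a smaller period
    have h2 : connPath G C e f (k + N' + 1) = connPath G C e f (j + N' + 1) := by
      rcases hb2 with h2 | h2
      · exact absurd (h1.trans h2.symm) hnbk
      · have := congrArg G.bar h2
        rwa [G.bar_invol, G.bar_invol] at this
    have hst := connPath_shift (C := C) hsf (d := k - j) (a := j + N' + 1) ?_ ?_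
    · have := hmin (k - j) (by omega) hst
      omega
    · rw [show j + N' + 1 + (k - j) = k + N' + 1 by omega]
      exact h2
    · rw [show j + N' + 1 + 1 + (k - j) = k + N' + 2 by omega,
        show j + N' + 1 + 1 = j + N' + 2 by omega]
      exact hpk.trans (h1.trans hpj.symm)
  · -- case B: reversal, contradiction via bar_ne / no-backtrack
    have h2 : connPath G C e f (k + N' + 1) = G.bar (connPath G C e f j) := by
      rcases hb2 with h2 | h2
      · have := congrArg G.bar h2
        rwa [G.bar_invol] at this
      · exact absurd (h1.trans h2.symm) hnbk
    have hmle : (k + N' + 1 + 4) * 2 ≤ (k + N' + 1 + 4) * (N' + 2) :=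
      Nat.mul_le_mul_left _ (by omega)
    have hA' : connPath G C e f (k + N' + 1) =
        G.bar (connPath G C e f (j + N' + 2 + (k + N' + 1 + 4) * (N' + 2))) := by
      rw [h2, ← hpj]
      congr 1
      exact (hmul (k + N' + 1 + 4) (j + N' + 2)).symm
    have hB' : connPath G C e f (k + N' + 1 + 1) =
        G.bar (connPath G C e f ((j + N' + 2 + (k + N' + 1 + 4) * (N' + 2)) - 1)) := by
      rw [show k + N' + 1 + 1 = k + N' + 2 by omega, hpk, h1,
        show j + N' + 2 + (k + N' + 1 + 4) * (N' + 2) - 1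
          = j + N' + 1 + (k + N' + 1 + 4) * (N' + 2) by omega]
      congr 1
      exact (hmul (k + N' + 1 + 4) (j + N' + 1)).symm
    have hrev := connPath_reverse hsf hA' hB'
    rcases Nat.even_or_odd ((j + N' + 2 + (k + N' + 1 + 4) * (N' + 2)) - (k + N' + 1)) with
      ⟨t, ht⟩ | ⟨t, ht⟩
    · have h := hrev t (by omega)
      rw [show (j + N' + 2 + (k + N' + 1 + 4) * (N' + 2)) - t = k + N' + 1 + t by omega] at h
      exact G.bar_ne _ h.symm
    · have h := hrev (t + 1) (by omega)
      rw [show (j + N' + 2 + (k + N' + 1 + 4) * (N' + 2)) - (t + 1) = k + N' + 1 + t by omega,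
        show k + N' + 1 + (t + 1) = (k + N' + 1 + t) + 1 by omega] at h
      exact connPath_no_backtrack hsf hef (k + N' + 1 + t) h

end
/-- Properties of connection paths in an abstract GKM₃ graph: (a) all labels of the path
lie in the ℚ-span of the two initial labels; (b) the path is periodic with minimal period
`N ≥ 2`; (c) the path does not self-intersect. -/
theorem connection_path_properties (G : Graph) {m : ℕ} (A : Axial G m) (h₃ : A.IsGKM 3)
    (C : Connection G) (hC : CompatibleConn G A.label C)
    (v : G.V) (e f : G.E) (he : G.src e = v) (hf : G.src f = v) (hef : e ≠ f) :
    (∀ k, ratQ (A.label (connPath G C e f k)) ∈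
        Submodule.span ℚ {ratQ (A.label e), ratQ (A.label f)}) ∧
    (∃ N, MinPeriod (connPath G C e f) N ∧ 2 ≤ N) ∧
    (∀ N, MinPeriod (connPath G C e f) N →
      ∀ j k, j < N → k < N → j ≠ k →
        G.src (connPath G C e f j) ≠ G.src (connPath G C e f k)) := by
  classical
  have hsf : G.src f = G.src e := hf.trans he.symm
  have hne1 : ∀ N, IsPeriod (connPath G C e f) N → 2 ≤ N := by
    intro N hN
    rcases hN with ⟨hpos, hper⟩
    by_contra h
    have hN1 : N = 1 := by omega
    have h10 : connPath G C e f 1 = connPath G C e f 0 := by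
      have := hper 0
      rwa [hN1] at this
    have hss := connPath_src_succ (C := C) hsf 0
    rw [h10] at hss
    exact G.no_loop _ hss.symm
  obtain ⟨d, hd, hdper⟩ := connPath_exists_period (C := C) (e := e) (f := f) hsf
  have hex : ∃ N, IsPeriod (connPath G C e f) N := ⟨d, hd, hdper⟩
  refine ⟨fun k => (connPath_label_mem hC hsf k).1,
    ⟨Nat.find hex, ⟨Nat.find_spec hex, fun N' h' => Nat.find_min' hex h'⟩,
      hne1 _ (Nat.find_spec hex)⟩, ?_⟩
  intro N hN j k hj hk hjk heq
  have hN2 : 2 ≤ N := hne1 N hN.1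
  obtain ⟨N', rfl⟩ : ∃ N', N = N' + 2 := ⟨N - 2, by omega⟩
  have hper := hN.1.2
  have hmin : ∀ d', 0 < d' → (∀ n, connPath G C e f (n + d') = connPath G C e f n) →
      N' + 2 ≤ d' := fun d' hd' hp' => hN.2 d' ⟨hd', hp'⟩
  rcases hjk.lt_or_gt with h | h
  · exact connPath_core h₃ hC hsf hef hper hmin h hk heq
  · exact connPath_core h₃ hC hsf hef hper hmin h hj heq.symm

end GKMQ
end

section
/- Let (Γ, α) be an abstract GKM₃ graph with a quaternionic structure, let v be a vertex and e ∈ E_v. Then there is at most one edge f ∈ E_v with f ≠ e for which there exist lifts α̃(e), α̃(f) ∈ ℤ^m of α(e), α(f) such that α̃(e) + α̃(f) is a lift of λ(v). Consequently, the partition of E_v into quaternionic pairs, as well as the quaternionically compatible families of lifts at v up to an overall sign, are uniquely determined by the unsigned labels α(g), g ∈ E_v, together with the quaternionic weight λ(v). -/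
namespace GKMQ

lemma pm_eps {m : ℕ} {x y : Fin m → ℤ} (h : PM x y) :
    ∃ ε : ℤ, (ε = 1 ∨ ε = -1) ∧ ∀ i, x i = ε * y i := by
  rcases h with h | h
  · exact ⟨1, Or.inl rfl, fun i => by simp [h]⟩
  · exact ⟨-1, Or.inr rfl, fun i => by simp [h]⟩

lemma pair_indep {m : ℕ} {x y : Fin m → ℚ} (h : LinearIndependent ℚ ![x, y]) :
    ∀ a b : ℚ, a • x + b • y = 0 → a = 0 ∧ b = 0 :=
  LinearIndependent.pair_iff.mp h

lemma triple_indep {G : Graph} {m : ℕ} {A : Axial G m} (h₃ : A.IsGKM 3) {v : G.V}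
    {e f g : G.E} (he : G.src e = v) (hf : G.src f = v) (hg : G.src g = v)
    (hef : e ≠ f) (heg : e ≠ g) (hfg : f ≠ g) :
    ∀ a b c : ℚ, a • ratQ (A.label e) + b • ratQ (A.label f) + c • ratQ (A.label g) = 0 →
      a = 0 ∧ b = 0 ∧ c = 0 := by
  classical
  intro a b c hrel
  set s : Finset G.E := {e, f, g} with hs
  have hmem : ∀ x ∈ s, G.src x = v := by
    intro x hx
    simp only [hs, Finset.mem_insert, Finset.mem_singleton] at hx
    rcases hx with rfl | rfl | rfl <;> assumption
  have hcard : s.card = 3 := by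
    rw [hs, Finset.card_insert_of_notMem (by simp [hef, heg]),
        Finset.card_insert_of_notMem (by simp [hfg]), Finset.card_singleton]
  have li := h₃ v s hmem hcard
  rw [Fintype.linearIndependent_iff] at li
  set coeff : G.E → ℚ := fun x => if x = e then a else if x = f then b else c with hco
  have hsum : ∑ i : {x // x ∈ s}, coeff i.1 • ratQ (A.label i.1) = 0 := by
    rw [Finset.sum_coe_sort s (fun x => coeff x • ratQ (A.label x))]
    rw [hs, Finset.sum_insert (by simp [hef, heg]), Finset.sum_insert (by simp [hfg]),
        Finset.sum_singleton]
    simp only [hco, if_pos rfl, if_neg (Ne.symm hef), if_neg (Ne.symm heg),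
      if_neg (Ne.symm hfg)]
    rw [← add_assoc]
    exact hrel
  have h0 := li (fun i => coeff i.1) hsum
  have hem : e ∈ s := by simp [hs]
  have hfm : f ∈ s := by simp [hs]
  have hgm : g ∈ s := by simp [hs]
  refine ⟨?_, ?_, ?_⟩
  · simpa [hco] using h0 ⟨e, hem⟩
  · simpa [hco, if_neg (Ne.symm hef)] using h0 ⟨f, hfm⟩
  · simpa [hco, if_neg (Ne.symm heg), if_neg (Ne.symm hfg)] using h0 ⟨g, hgm⟩

/-- In a GKM₃ graph with quaternionic structure, the quaternionic partner of an edge,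
the partition into quaternionic pairs, and (up to an overall sign) the quaternionically
compatible families of lifts at a vertex are uniquely determined by the unsigned edge
labels together with the quaternionic weight. -/
theorem qpair_unique (G : Graph) {m : ℕ} (A : Axial G m) (h₃ : A.IsGKM 3)
    (Q : QuatStructure G A) (v : G.V) :
    (∀ e, G.src e = v →
      ∀ f₁ f₂, G.src f₁ = v → G.src f₂ = v → f₁ ≠ e → f₂ ≠ e →
        (∃ x y, PM x (A.label e) ∧ PM y (A.label f₁) ∧ PM (x + y) (Q.lam v)) →
        (∃ x y, PM x (A.label e) ∧ PM y (A.label f₂) ∧ PM (x + y) (Q.lam v)) →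
        f₁ = f₂) ∧
    (∀ e, G.src e = v → ∀ f, G.src f = v → f ≠ e →
      ((∃ x y, PM x (A.label e) ∧ PM y (A.label f) ∧ PM (x + y) (Q.lam v)) ↔
        f = Q.qpair e)) ∧
    (∀ L ℓ L' ℓ',
      QFam G A.label Q.lam Q.qpair v L ℓ → QFam G A.label Q.lam Q.qpair v L' ℓ' →
      (ℓ' = ℓ ∧ ∀ e, G.src e = v → L' e = L e) ∨
      (ℓ' = -ℓ ∧ ∀ e, G.src e = v → L' e = -(L e))) := by
  have part1 : ∀ e, G.src e = v →
      ∀ f₁ f₂, G.src f₁ = v → G.src f₂ = v → f₁ ≠ e → f₂ ≠ e →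
        (∃ x y, PM x (A.label e) ∧ PM y (A.label f₁) ∧ PM (x + y) (Q.lam v)) →
        (∃ x y, PM x (A.label e) ∧ PM y (A.label f₂) ∧ PM (x + y) (Q.lam v)) →
        f₁ = f₂ := by
    intro e he f₁ f₂ hf₁ hf₂ hne₁ hne₂ h₁ h₂
    obtain ⟨x₁, y₁, hx₁, hy₁, hs₁⟩ := h₁
    obtain ⟨x₂, y₂, hx₂, hy₂, hs₂⟩ := h₂
    by_contra hne
    obtain ⟨ε₁, hε₁, hx₁'⟩ := pm_eps hx₁
    obtain ⟨δ₁, hδ₁, hy₁'⟩ := pm_eps hy₁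
    obtain ⟨σ₁, hσ₁, hs₁'⟩ := pm_eps hs₁
    obtain ⟨ε₂, hε₂, hx₂'⟩ := pm_eps hx₂
    obtain ⟨δ₂, hδ₂, hy₂'⟩ := pm_eps hy₂
    obtain ⟨σ₂, hσ₂, hs₂'⟩ := pm_eps hs₂
    have key : ∀ i, (σ₂ * σ₁ * ε₁ - ε₂) * A.label e i + (σ₂ * σ₁ * δ₁) * A.label f₁ i
        + (-δ₂) * A.label f₂ i = 0 := by
      intro i
      have h1 := hx₁' i
      have h2 := hy₁' i
      have h3 : x₁ i + y₁ i = σ₁ * Q.lam v i := by simpa using hs₁' i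
      have h4 := hx₂' i
      have h5 := hy₂' i
      have h6 : x₂ i + y₂ i = σ₂ * Q.lam v i := by simpa using hs₂' i
      rcases hε₁ with rfl | rfl <;> rcases hδ₁ with rfl | rfl <;>
        rcases hσ₁ with rfl | rfl <;> rcases hε₂ with rfl | rfl <;>
        rcases hδ₂ with rfl | rfl <;> rcases hσ₂ with rfl | rfl <;> linarith
    have hrel : ((σ₂ * σ₁ * ε₁ - ε₂ : ℤ) : ℚ) • ratQ (A.label e)
        + ((σ₂ * σ₁ * δ₁ : ℤ) : ℚ) • ratQ (A.label f₁)
        + ((-δ₂ : ℤ) : ℚ) • ratQ (A.label f₂) = 0 := by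
      funext i
      have := key i
      simp only [Pi.add_apply, Pi.smul_apply, smul_eq_mul, ratQ, Pi.zero_apply]
      push_cast
      exact_mod_cast congrArg (fun z : ℤ => (z : ℚ)) this
    have := (triple_indep h₃ he hf₁ hf₂ (Ne.symm hne₁) (Ne.symm hne₂) hne _ _ _ hrel).2.1
    have hz : (σ₂ * σ₁ * δ₁ : ℤ) = 0 := by exact_mod_cast this
    rcases hδ₁ with rfl | rfl <;> rcases hσ₁ with rfl | rfl <;>
      rcases hσ₂ with rfl | rfl <;> omega
  refine ⟨part1, ?_, ?_⟩
  · intro e he f hf hfe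
    constructor
    · intro hex
      obtain ⟨x, y, hx, hy, hxy⟩ := Q.pair_sum e
      rw [he] at hxy
      exact part1 e he f (Q.qpair e) hf ((Q.qpair_src e).trans he) hfe (Q.qpair_ne e)
        hex ⟨x, y, hx, hy, hxy⟩
    · rintro rfl
      obtain ⟨x, y, hx, hy, hxy⟩ := Q.pair_sum e
      rw [he] at hxy
      exact ⟨x, y, hx, hy, hxy⟩
  · intro L ℓ L' ℓ' hL hL'
    obtain ⟨hℓ, hE⟩ := hL
    obtain ⟨hℓ', hE'⟩ := hL'
    have hll : ℓ' = ℓ ∨ ℓ' = -ℓ := by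
      rcases hℓ with h1 | h1 <;> rcases hℓ' with h2 | h2
      · exact Or.inl (h2.trans h1.symm)
      · exact Or.inr (by rw [h2, h1])
      · exact Or.inr (by rw [h2, h1]; simp)
      · exact Or.inl (h2.trans h1.symm)
    have main : ∀ u : ℤ, (u = 1 ∨ u = -1) → (∀ i, ℓ' i = u * ℓ i) →
        ∀ g, G.src g = v → ∀ i, L' g i = u * L g i := by
      intro u hu hu' g hg
      have hqg : G.src (Q.qpair g) = v := (Q.qpair_src g).trans hg
      obtain ⟨hpg, hsumg⟩ := hE g hg
      obtain ⟨hpqg, hsumqg⟩ := hE (Q.qpair g) hqg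
      obtain ⟨hpg', hsumg'⟩ := hE' g hg
      obtain ⟨hpqg', hsumqg'⟩ := hE' (Q.qpair g) hqg
      obtain ⟨ε, hε, hεe⟩ := pm_eps hpg
      obtain ⟨δ, hδ, hδe⟩ := pm_eps hpqg
      obtain ⟨ε', hε', hεe'⟩ := pm_eps hpg'
      obtain ⟨δ', hδ', hδe'⟩ := pm_eps hpqg'
      have li := pair_indep
        (A.indep₂ g (Q.qpair g) (Q.qpair_src g) (Ne.symm (Q.qpair_ne g)))
      have key : ∀ i, (ε' - u * ε) * A.label g i
          + (δ' - u * δ) * A.label (Q.qpair g) i = 0 := by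
        intro i
        have h1 : L g i + L (Q.qpair g) i = ℓ i := by
          have := congrFun hsumg i; simpa using this
        have h2 : L' g i + L' (Q.qpair g) i = ℓ' i := by
          have := congrFun hsumg' i; simpa using this
        have h3 := hεe i
        have h4 := hδe i
        have h5 := hεe' i
        have h6 := hδe' i
        have h7 := hu' i
        rcases hε with rfl | rfl <;> rcases hδ with rfl | rfl <;>
          rcases hε' with rfl | rfl <;> rcases hδ' with rfl | rfl <;>
          rcases hu with rfl | rfl <;> linarith
      have hrel : ((ε' - u * ε : ℤ) : ℚ) • ratQ (A.label g)
          + ((δ' - u * δ : ℤ) : ℚ) • ratQ (A.label (Q.qpair g)) = 0 := by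
        funext i
        have := key i
        simp only [Pi.add_apply, Pi.smul_apply, smul_eq_mul, ratQ, Pi.zero_apply]
        push_cast
        exact_mod_cast congrArg (fun z : ℤ => (z : ℚ)) this
      have h0 := (li _ _ hrel).1
      have hz : (ε' - u * ε : ℤ) = 0 := by exact_mod_cast h0
      intro i
      rw [hεe' i, hεe i]
      have : ε' = u * ε := by omega
      rw [this]; ring
    rcases hll with h | h
    · refine Or.inl ⟨h, fun g hg => ?_⟩
      funext i
      simpa using main 1 (Or.inl rfl) (fun i => by rw [h]; ring) g hg i
    · refine Or.inr ⟨h, fun g hg => ?_⟩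
      funext i
      have := main (-1) (Or.inr rfl) (fun i => by rw [h]; simp) g hg i
      simpa using this

end GKMQ
end
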